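/- Let X = {0,1}^{d−1} × {0} ⊂ ℝ^d be the vertex set of the unit hypercube and let x₀ = (1/2, …, 1/2, c) ∈ ℝ^d with c > √(d−1)/2. Then there exists δ > 0 such that for every map x ↦ x' from X to ℝ^d with |x − x'| ≤ δ for all x ∈ X for which the set {x' : x ∈ X} is an acute set of size 2^{d−1}, the enlarged set {x₀} ∪ {x' : x ∈ X} is an acute set of size 2^{d−1}+1. -/

import Mathlib

/-- The vertex set `{0,1}^(d-1) × {0}` of the `(d-1)`-dimensional unit hypercube
embedded in `ℝ^d` with last coordinate `0`. -/
def hypercube (d : ℕ) : Set (EuclideanSpace ℝ (Fin d)) :=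
  {v | ∀ i : Fin d, if (i : ℕ) = d - 1 then v i = 0 else v i = 0 ∨ v i = 1}

/-- Let `x₀ = (1/2, …, 1/2, c) ∈ ℝ^d` with `c > √(d-1)/2`.  There exists `δ > 0` such
that whenever each vertex `x` of the hypercube `X = {0,1}^(d-1) × {0}` is moved by
distance at most `δ` to a point `x'` in such a way that the resulting points form an
acute set of size `2^(d-1)`, the enlarged set with `x₀` added is an acute set of size
`2^(d-1) + 1`. -/
private lemma apex_angle_lt_of_inner_pos {V : Type*} [NormedAddCommGroup V]
    [InnerProductSpace ℝ V] {p q r : V} (h : 0 < (inner ℝ (p - q) (r - q) : ℝ)) :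
    EuclideanGeometry.angle p q r < Real.pi / 2 := by
  have hu : p - q ≠ 0 := by rintro h0; simp [h0] at h
  have hv : r - q ≠ 0 := by rintro h0; simp [h0] at h
  rw [EuclideanGeometry.angle, vsub_eq_sub, vsub_eq_sub, InnerProductGeometry.angle,
    Real.arccos_lt_pi_div_two]
  exact div_pos h (mul_pos (norm_pos_iff.2 hu) (norm_pos_iff.2 hv))

private lemma apex_inner_perturb {V : Type*} [NormedAddCommGroup V] [InnerProductSpace ℝ V]
    (u u' v v' : V) :
    |(inner ℝ u' v' : ℝ) - inner ℝ u v| ≤ ‖u' - u‖ * ‖v'‖ + ‖u‖ * ‖v' - v‖ := by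
  have h : (inner ℝ u' v' : ℝ) - inner ℝ u v = inner ℝ (u' - u) v' + inner ℝ u (v' - v) := by
    rw [inner_sub_left, inner_sub_right]; ring
  rw [h]
  calc |(inner ℝ (u' - u) v' : ℝ) + inner ℝ u (v' - v)|
      ≤ |(inner ℝ (u' - u) v' : ℝ)| + |(inner ℝ u (v' - v) : ℝ)| := abs_add_le _ _
    _ ≤ _ := add_le_add (abs_real_inner_le_norm _ _) (abs_real_inner_le_norm _ _)

section helpers
variable {d : ℕ} {c : ℝ} {x₀ : EuclideanSpace ℝ (Fin d)}

private lemma apex_innerA (hd : 2 ≤ d)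
    (hx₀ : ∀ i : Fin d, x₀ i = if (i : ℕ) = d - 1 then c else 1 / 2) {y z : EuclideanSpace ℝ (Fin d)}
    (hy : y ∈ hypercube d) (hz : z ∈ hypercube d) :
    c ^ 2 - ((d : ℝ) - 1) / 4 ≤ (inner ℝ (y - x₀) (z - x₀) : ℝ) := by
  have hjlt : d - 1 < d := by omega
  set j : Fin d := ⟨d - 1, hjlt⟩ with hjdef
  have hinner : (inner ℝ (y - x₀) (z - x₀) : ℝ) = ∑ i, (y i - x₀ i) * (z i - x₀ i) := by
    simp [PiLp.inner_apply, RCLike.inner_apply, mul_comm]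
  rw [hinner, ← Finset.sum_erase_add _ _ (Finset.mem_univ j)]
  have hyj : y j = 0 := by have := hy j; simpa [hjdef] using this
  have hzj : z j = 0 := by have := hz j; simpa [hjdef] using this
  have hx₀j : x₀ j = c := by simpa [hjdef] using hx₀ j
  have hterm : (y j - x₀ j) * (z j - x₀ j) = c ^ 2 := by
    rw [hyj, hzj, hx₀j]; ring
  rw [hterm]
  have hcard : (Finset.univ.erase j).card = d - 1 := by
    rw [Finset.card_erase_of_mem (Finset.mem_univ j), Finset.card_univ, Fintype.card_fin]
  have hlb : ∀ i ∈ Finset.univ.erase j, -(1/4 : ℝ) ≤ (y i - x₀ i) * (z i - x₀ i) := by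
    intro i hi
    have hij : (i : ℕ) ≠ d - 1 := by
      intro h
      exact (Finset.mem_erase.1 hi).1 (Fin.ext h)
    have hyi := hy i; have hzi := hz i
    rw [if_neg hij] at hyi hzi
    have hx₀i : x₀ i = 1/2 := by simpa [hij] using hx₀ i
    rw [hx₀i]
    rcases hyi with h1 | h1 <;> rcases hzi with h2 | h2 <;> rw [h1, h2] <;> norm_num
  have hsum := Finset.card_nsmul_le_sum _ _ _ hlb
  rw [nsmul_eq_mul, hcard] at hsum
  have hdcast : ((d - 1 : ℕ) : ℝ) = (d : ℝ) - 1 := by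
    have : 1 ≤ d := by omega
    push_cast [this]; ring
  rw [hdcast] at hsum
  nlinarith [hsum]

private lemma apex_innerB (hd : 2 ≤ d)
    (hx₀ : ∀ i : Fin d, x₀ i = if (i : ℕ) = d - 1 then c else 1 / 2) {y z : EuclideanSpace ℝ (Fin d)}
    (hy : y ∈ hypercube d) (hz : z ∈ hypercube d) (hyz : y ≠ z) :
    (1 / 2 : ℝ) ≤ (inner ℝ (x₀ - y) (z - y) : ℝ) := by
  have hjlt : d - 1 < d := by omega
  set j : Fin d := ⟨d - 1, hjlt⟩ with hjdef
  have hinner : (inner ℝ (x₀ - y) (z - y) : ℝ) = ∑ i, (x₀ i - y i) * (z i - y i) := by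
    simp [PiLp.inner_apply, RCLike.inner_apply, mul_comm]
  rw [hinner]
  have hnonneg : ∀ i : Fin d, (0 : ℝ) ≤ (x₀ i - y i) * (z i - y i) := by
    intro i
    by_cases hij : (i : ℕ) = d - 1
    · have hyi : y i = 0 := by have := hy i; rwa [if_pos hij] at this
      have hzi : z i = 0 := by have := hz i; rwa [if_pos hij] at this
      rw [hyi, hzi]; norm_num
    · have hyi := hy i; have hzi := hz i
      rw [if_neg hij] at hyi hzi
      have hx₀i : x₀ i = 1/2 := by simpa [hij] using hx₀ i
      rw [hx₀i]
      rcases hyi with h1 | h1 <;> rcases hzi with h2 | h2 <;> rw [h1, h2] <;> norm_num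
  obtain ⟨i₀, hi₀⟩ : ∃ i, y i ≠ z i := by
    by_contra h
    push_neg at h
    exact hyz (PiLp.ext h)
  have hij₀ : (i₀ : ℕ) ≠ d - 1 := by
    intro h
    have hyi : y i₀ = 0 := by have := hy i₀; rwa [if_pos h] at this
    have hzi : z i₀ = 0 := by have := hz i₀; rwa [if_pos h] at this
    exact hi₀ (hyi.trans hzi.symm)
  have hyi := hy i₀; have hzi := hz i₀
  rw [if_neg hij₀] at hyi hzi
  have hx₀i : x₀ i₀ = 1/2 := by simpa [hij₀] using hx₀ i₀
  have hterm : (1/2 : ℝ) ≤ (x₀ i₀ - y i₀) * (z i₀ - y i₀) := by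
    rw [hx₀i]
    rcases hyi with h1 | h1 <;> rcases hzi with h2 | h2 <;>
      first
      | (exact absurd (h1.trans h2.symm) hi₀)
      | (rw [h1, h2]; norm_num)
  calc (1/2 : ℝ) ≤ (x₀ i₀ - y i₀) * (z i₀ - y i₀) := hterm
    _ ≤ ∑ i, (x₀ i - y i) * (z i - y i) :=
        Finset.single_le_sum (fun i _ => hnonneg i) (Finset.mem_univ i₀)

end helpers

private lemma apex_coord_le_norm {d : ℕ} (v : EuclideanSpace ℝ (Fin d)) (j : Fin d) :
    |v j| ≤ ‖v‖ := by
  rw [EuclideanSpace.norm_eq]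
  have h1 : ‖v j‖ ^ 2 ≤ ∑ i, ‖v i‖ ^ 2 :=
    Finset.single_le_sum (f := fun i => ‖v i‖ ^ 2) (fun i _ => sq_nonneg _) (Finset.mem_univ j)
  calc |v j| = Real.sqrt (‖v j‖ ^ 2) := by
        rw [Real.sqrt_sq_eq_abs, Real.norm_eq_abs, abs_abs]
    _ ≤ _ := Real.sqrt_le_sqrt h1

private lemma apex_norm_hypercube {d : ℕ} (hd : 2 ≤ d) {y : EuclideanSpace ℝ (Fin d)}
    (hy : y ∈ hypercube d) : ‖y‖ ≤ (d : ℝ) := by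
  have hd2 : (2 : ℝ) ≤ (d : ℝ) := by exact_mod_cast hd
  rw [EuclideanSpace.norm_eq]
  have h1 : ∑ i, ‖y i‖ ^ 2 ≤ (d : ℝ) := by
    calc ∑ i, ‖y i‖ ^ 2 ≤ ∑ _i : Fin d, (1 : ℝ) := by
          refine Finset.sum_le_sum (fun i _ => ?_)
          have hyi := hy i
          split at hyi
          · rw [hyi]; norm_num
          · rcases hyi with h | h <;> rw [h] <;> norm_num
      _ = (d : ℝ) := by simp
  calc Real.sqrt (∑ i, ‖y i‖ ^ 2) ≤ Real.sqrt ((d : ℝ) ^ 2) :=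
        Real.sqrt_le_sqrt (by nlinarith)
    _ = (d : ℝ) := Real.sqrt_sq (by positivity)

private lemma apex_norm_x₀ {d : ℕ} (hd : 2 ≤ d) {c : ℝ} {x₀ : EuclideanSpace ℝ (Fin d)}
    (hx₀ : ∀ i : Fin d, x₀ i = if (i : ℕ) = d - 1 then c else 1 / 2) :
    ‖x₀‖ ≤ (d : ℝ) * (|c| + 1) := by
  have hd2 : (2 : ℝ) ≤ (d : ℝ) := by exact_mod_cast hd
  rw [EuclideanSpace.norm_eq]
  have h1 : ∑ i, ‖x₀ i‖ ^ 2 ≤ (d : ℝ) * (c ^ 2 + 1) := by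
    calc ∑ i, ‖x₀ i‖ ^ 2 ≤ ∑ _i : Fin d, (c ^ 2 + 1) := by
          refine Finset.sum_le_sum (fun i _ => ?_)
          rw [hx₀ i]
          split
          · rw [Real.norm_eq_abs, sq_abs]; linarith
          · rw [Real.norm_eq_abs]
            have : |(1 / 2 : ℝ)| = 1 / 2 := by norm_num
            rw [this]; nlinarith [sq_nonneg c]
      _ = (d : ℝ) * (c ^ 2 + 1) := by simp; ring
  calc Real.sqrt (∑ i, ‖x₀ i‖ ^ 2) ≤ Real.sqrt (((d : ℝ) * (|c| + 1)) ^ 2) := by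
        refine Real.sqrt_le_sqrt (h1.trans ?_)
        have hd0 : (0 : ℝ) ≤ (d : ℝ) := by positivity
        nlinarith [sq_abs c, abs_nonneg c,
          mul_nonneg (mul_nonneg hd0 (by linarith : (0:ℝ) ≤ (d:ℝ) - 1)) (sq_nonneg c),
          mul_nonneg (mul_nonneg hd0 hd0) (abs_nonneg c)]
    _ = (d : ℝ) * (|c| + 1) := Real.sqrt_sq (by positivity)

set_option maxHeartbeats 1000000 in
theorem add_apex_to_perturbed_cube (d : ℕ) (hd : 2 ≤ d) (c : ℝ)
    (hc : Real.sqrt ((d : ℝ) - 1) / 2 < c)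
    (x₀ : EuclideanSpace ℝ (Fin d))
    (hx₀ : ∀ i : Fin d, x₀ i = if (i : ℕ) = d - 1 then c else 1 / 2) :
    ∃ δ > 0, ∀ f : EuclideanSpace ℝ (Fin d) → EuclideanSpace ℝ (Fin d),
      (∀ x ∈ hypercube d, dist x (f x) ≤ δ) →
      (f '' hypercube d).ncard = 2 ^ (d - 1) →
      (∀ p ∈ f '' hypercube d, ∀ q ∈ f '' hypercube d, ∀ r ∈ f '' hypercube d,
        p ≠ q → q ≠ r → p ≠ r → EuclideanGeometry.angle p q r < Real.pi / 2) →
      (insert x₀ (f '' hypercube d)).ncard = 2 ^ (d - 1) + 1 ∧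
      ∀ p ∈ insert x₀ (f '' hypercube d), ∀ q ∈ insert x₀ (f '' hypercube d),
        ∀ r ∈ insert x₀ (f '' hypercube d),
        p ≠ q → q ≠ r → p ≠ r → EuclideanGeometry.angle p q r < Real.pi / 2 := by
  have hd2 : (2 : ℝ) ≤ (d : ℝ) := by exact_mod_cast hd
  have hc0 : 0 < c := lt_of_le_of_lt (by positivity) hc
  have hdm1 : (0 : ℝ) ≤ (d : ℝ) - 1 := by linarith
  have ha : 0 < c ^ 2 - ((d : ℝ) - 1) / 4 := by
    nlinarith [Real.sq_sqrt hdm1, Real.sqrt_nonneg ((d : ℝ) - 1)]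
  set M : ℝ := (d : ℝ) * (|c| + 2) + 1 with hMdef
  have hM : 0 < M := by positivity
  set ε : ℝ := min (c ^ 2 - ((d : ℝ) - 1) / 4) (1 / 2) with hεdef
  have hε : 0 < ε := lt_min ha (by norm_num)
  set δ : ℝ := min (ε / (8 * M)) (min (c / 2) 1) with hδdef
  have hδpos : 0 < δ :=
    lt_min (div_pos hε (by positivity)) (lt_min (by positivity) one_pos)
  refine ⟨δ, hδpos, ?_⟩
  intro f hf hcard hacute
  have h8 : δ * (8 * M) ≤ ε := (le_div_iff₀ (by positivity)).1 (min_le_left _ _)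
  have hδc : δ ≤ c / 2 := (min_le_right _ _).trans (min_le_left _ _)
  have hδ1 : δ ≤ 1 := (min_le_right _ _).trans (min_le_right _ _)
  -- finiteness
  have hXfin : (hypercube d).Finite := by
    have h : (hypercube d) ⊆ WithLp.ofLp ⁻¹' Set.pi Set.univ (fun _ : Fin d => ({0, 1} : Set ℝ)) := by
      intro v hv i _
      have := hv i
      split at this
      · rw [this]; exact Set.mem_insert _ _
      · rcases this with h | h <;> simp [h]
    exact ((Set.Finite.pi (fun i => by simp)).preimage (WithLp.ofLp_injective 2).injOn).subset h
  have hSfin : (f '' hypercube d).Finite := hXfin.image f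
  -- norm bounds
  have hny : ∀ y ∈ hypercube d, ‖y‖ ≤ M := by
    intro y hy
    have := apex_norm_hypercube hd hy
    have habs : 0 ≤ |c| := abs_nonneg c
    nlinarith
  have hnx₀ : ‖x₀‖ ≤ M := by
    have := apex_norm_x₀ hd hx₀
    have hd0 : (0 : ℝ) ≤ (d : ℝ) := by positivity
    nlinarith
  have hnfy : ∀ y ∈ hypercube d, ‖f y‖ ≤ M := by
    intro y hy
    have h1 : ‖f y‖ - ‖y‖ ≤ ‖f y - y‖ := norm_sub_norm_le _ _
    have h2 : ‖f y - y‖ ≤ δ := by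
      rw [norm_sub_rev, ← dist_eq_norm]; exact hf y hy
    have h3 := apex_norm_hypercube hd hy
    have habs : 0 ≤ |c| := abs_nonneg c
    have hd0 : (0 : ℝ) ≤ (d : ℝ) := by positivity
    nlinarith
  have hdist : ∀ y ∈ hypercube d, ‖f y - y‖ ≤ δ := by
    intro y hy
    rw [norm_sub_rev, ← dist_eq_norm]; exact hf y hy
  -- x₀ is not in the image
  have hjlt : d - 1 < d := by omega
  have hx₀notmem : x₀ ∉ f '' hypercube d := by
    rintro ⟨y, hy, hfy⟩
    set j : Fin d := ⟨d - 1, hjlt⟩ with hjdef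
    have hyj : y j = 0 := by have := hy j; simpa [hjdef] using this
    have hx₀j : x₀ j = c := by simpa [hjdef] using hx₀ j
    have h1 : c ≤ ‖x₀ - y‖ := by
      have := apex_coord_le_norm (x₀ - y) j
      have hco : (x₀ - y) j = c := by simp [hx₀j, hyj]
      rw [hco, abs_of_pos hc0] at this
      exact this
    have h2 : ‖x₀ - y‖ ≤ δ := by
      rw [← hfy]; exact hdist y hy
    linarith
  -- the two inner product claims
  have claim1 : ∀ y ∈ hypercube d, ∀ z ∈ hypercube d,
      0 < (inner ℝ (f y - x₀) (f z - x₀) : ℝ) := by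
    intro y hy z hz
    have base := apex_innerA hd hx₀ hy hz
    have pert := apex_inner_perturb (y - x₀) (f y - x₀) (z - x₀) (f z - x₀)
    have e1 : f y - x₀ - (y - x₀) = f y - y := by abel
    have e2 : f z - x₀ - (z - x₀) = f z - z := by abel
    rw [e1, e2] at pert
    have n1 : ‖f y - y‖ ≤ δ := hdist y hy
    have n2 : ‖f z - z‖ ≤ δ := hdist z hz
    have n3 : ‖f z - x₀‖ ≤ M + M :=
      (norm_sub_le _ _).trans (add_le_add (hnfy z hz) hnx₀)
    have n4 : ‖y - x₀‖ ≤ M + M :=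
      (norm_sub_le _ _).trans (add_le_add (hny y hy) hnx₀)
    have hbound : |(inner ℝ (f y - x₀) (f z - x₀) : ℝ) - inner ℝ (y - x₀) (z - x₀)| ≤
        δ * (M + M) + (M + M) * δ :=
      pert.trans (add_le_add
        (mul_le_mul n1 n3 (norm_nonneg _) hδpos.le)
        (mul_le_mul n4 n2 (norm_nonneg _) (by linarith)))
    have h1 := (abs_le.1 hbound).1
    have hεle : ε ≤ c ^ 2 - ((d : ℝ) - 1) / 4 := min_le_left _ _
    nlinarith
  have claim2 : ∀ y ∈ hypercube d, ∀ z ∈ hypercube d, y ≠ z →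
      0 < (inner ℝ (x₀ - f y) (f z - f y) : ℝ) := by
    intro y hy z hz hyz
    have base := apex_innerB hd hx₀ hy hz hyz
    have pert := apex_inner_perturb (x₀ - y) (x₀ - f y) (z - y) (f z - f y)
    have e1 : x₀ - f y - (x₀ - y) = y - f y := by abel
    have e2 : f z - f y - (z - y) = (f z - z) + (y - f y) := by abel
    rw [e1, e2] at pert
    have n1 : ‖y - f y‖ ≤ δ := by rw [← dist_eq_norm]; exact hf y hy
    have n2 : ‖(f z - z) + (y - f y)‖ ≤ δ + δ :=
      (norm_add_le _ _).trans (add_le_add (hdist z hz) n1)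
    have n3 : ‖f z - f y‖ ≤ M + M :=
      (norm_sub_le _ _).trans (add_le_add (hnfy z hz) (hnfy y hy))
    have n4 : ‖x₀ - y‖ ≤ M + M :=
      (norm_sub_le _ _).trans (add_le_add hnx₀ (hny y hy))
    have hbound : |(inner ℝ (x₀ - f y) (f z - f y) : ℝ) - inner ℝ (x₀ - y) (z - y)| ≤
        δ * (M + M) + (M + M) * (δ + δ) :=
      pert.trans (add_le_add
        (mul_le_mul n1 n3 (norm_nonneg _) hδpos.le)
        (mul_le_mul n4 n2 (norm_nonneg _) (by linarith)))
    have h1 := (abs_le.1 hbound).1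
    have hεle : ε ≤ 1 / 2 := min_le_right _ _
    nlinarith
  constructor
  · rw [Set.ncard_insert_of_notMem hx₀notmem hSfin, hcard]
  · intro p hp q hq r hr hpq hqr hpr
    simp only [Set.mem_insert_iff] at hp hq hr
    rcases hq with rfl | hq
    · have hp' : p ∈ f '' hypercube d := hp.resolve_left hpq
      have hr' : r ∈ f '' hypercube d := hr.resolve_left (fun h => hqr h.symm)
      obtain ⟨y, hy, rfl⟩ := hp'
      obtain ⟨z, hz, rfl⟩ := hr'
      exact apex_angle_lt_of_inner_pos (claim1 y hy z hz)
    · obtain ⟨y, hy, rfl⟩ := hq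
      rcases hp with rfl | hp
      · have hr' : r ∈ f '' hypercube d := hr.resolve_left (fun h => hpr h.symm)
        obtain ⟨z, hz, rfl⟩ := hr'
        have hyz : y ≠ z := by rintro rfl; exact hqr rfl
        exact apex_angle_lt_of_inner_pos (claim2 y hy z hz hyz)
      · rcases hr with rfl | hr'
        · rw [EuclideanGeometry.angle_comm]
          obtain ⟨z, hz, rfl⟩ := hp
          have hyz : y ≠ z := by rintro rfl; exact hpq rfl
          exact apex_angle_lt_of_inner_pos (claim2 y hy z hz hyz)
        · exact hacute p hp (f y) ⟨y, hy, rfl⟩ r hr' hpq hqr hpr
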